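/- arXiv:1906.05545 — 4 statements merged into one kernel-verified Lean document; each statement's English description precedes it below -/
import Mathlib

section
/- Let N ≥ 1 and let Λ be a real N×r matrix. Then the matrix I_N + Λ Λᵀ is positive definite (in particular invertible), and the trace of its inverse satisfies tr((I_N + Λ Λᵀ)⁻¹) ≤ N − tr(Λ Λᵀ) / (N + tr(Λ Λᵀ)). (This is Proposition 1 of the paper, stated with Σ_u = I_N: the sum of the eigenvalues of the precision matrix Σ⁻¹ = (Λ Λᵀ + I_N)⁻¹ is at most the sum of eigenvalues of I_N minus tr(Λ Λᵀ)/(N + tr(Λ Λᵀ)).) -/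
open Matrix

lemma saf_aux_sum (N : ℕ) (hN : 1 ≤ N) (μ : Fin N → ℝ) (hμ : ∀ i, 0 ≤ μ i) :
    ∑ i, (1 + μ i)⁻¹ ≤ (N : ℝ) - (∑ i, μ i) / ((N : ℝ) + ∑ i, μ i) := by
  set t := ∑ i, μ i with ht
  have ht0 : 0 ≤ t := Finset.sum_nonneg fun i _ => hμ i
  have hN1 : (1 : ℝ) ≤ N := by exact_mod_cast hN
  have hNt : 0 < (N : ℝ) + t := by linarith
  have hpos : ∀ i, 0 < 1 + μ i := fun i => by have := hμ i; linarith
  have h1 : ∀ i, (1 + μ i)⁻¹ = 1 - μ i / (1 + μ i) := by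
    intro i
    rw [eq_sub_iff_add_eq, inv_eq_one_div, ← add_div, div_self (hpos i).ne']
  have hsum : ∑ i, (1 + μ i)⁻¹ = (N : ℝ) - ∑ i, μ i / (1 + μ i) := by
    rw [Finset.sum_congr rfl fun i _ => h1 i, Finset.sum_sub_distrib]
    simp
  rw [hsum]
  have key : t / ((N : ℝ) + t) ≤ ∑ i, μ i / (1 + μ i) := by
    have h2 : ∀ i ∈ Finset.univ, μ i / ((N : ℝ) + t) ≤ μ i / (1 + μ i) := by
      intro i _
      have hle : μ i ≤ t := Finset.single_le_sum (fun j _ => hμ j) (Finset.mem_univ i)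
      gcongr
      all_goals first | exact hμ i | exact hpos i
    calc t / ((N : ℝ) + t) = ∑ i, μ i / ((N : ℝ) + t) := by rw [← Finset.sum_div]
      _ ≤ ∑ i, μ i / (1 + μ i) := Finset.sum_le_sum h2
  linarith

/-- Proposition 1 (with Σ_u = I_N): for an N×r loadings matrix Λ, the matrix
I_N + Λ Λᵀ is positive definite (hence invertible) and
tr((I_N + Λ Λᵀ)⁻¹) ≤ N − tr(Λ Λᵀ)/(N + tr(Λ Λᵀ)). -/
theorem saf_gmvp_precision_trace_bound (N r : ℕ) (hN : 1 ≤ N)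
    (Λ : Matrix (Fin N) (Fin r) ℝ) :
    (1 + Λ * Λᵀ).PosDef ∧ IsUnit (1 + Λ * Λᵀ) ∧
      ((1 + Λ * Λᵀ)⁻¹).trace ≤
        (N : ℝ) - (Λ * Λᵀ).trace / ((N : ℝ) + (Λ * Λᵀ).trace) := by
  have hT : Λᵀ = Λᴴ := by ext i j; simp [Matrix.conjTranspose]
  set A := Λ * Λᵀ with hAdef
  have hApsd : A.PosSemidef := by
    rw [hAdef, hT]; exact posSemidef_self_mul_conjTranspose Λ
  have hA : A.IsHermitian := hApsd.isHermitian
  have hBpd : (1 + A).PosDef := Matrix.PosDef.add_posSemidef Matrix.PosDef.one hApsd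
  have hBunit : IsUnit (1 + A) :=
    (Matrix.isUnit_iff_isUnit_det _).mpr (isUnit_iff_ne_zero.mpr hBpd.det_pos.ne')
  refine ⟨hBpd, hBunit, ?_⟩
  set μ := hA.eigenvalues with hμdef
  have hμ : ∀ i, 0 ≤ μ i := hApsd.eigenvalues_nonneg
  set U : Matrix (Fin N) (Fin N) ℝ := (hA.eigenvectorUnitary : Matrix (Fin N) (Fin N) ℝ) with hUdef
  have hUU : star U * U = 1 := Unitary.coe_star_mul_self _
  have hUU' : U * star U = 1 := Unitary.coe_mul_star_self _
  have hspec : A = U * diagonal μ * star U := by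
    have h := hA.spectral_theorem
    simpa using h
  have hpos : ∀ i, (0:ℝ) < 1 + μ i := fun i => by have := hμ i; linarith
  have hne : ∀ i, (1 + μ i) ≠ 0 := fun i => (hpos i).ne'
  have hdiag : diagonal (fun i => 1 + μ i) = 1 + diagonal μ := by
    rw [← diagonal_one, diagonal_add]
  have hB : (1 + A) = U * diagonal (fun i => 1 + μ i) * star U := by
    rw [hdiag, mul_add, add_mul, mul_one, hUU', hspec]
  have hinv : (1 + A)⁻¹ = U * diagonal (fun i => (1 + μ i)⁻¹) * star U := by
    apply inv_eq_right_inv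
    rw [hB]
    simp only [Matrix.mul_assoc]
    rw [← Matrix.mul_assoc (star U) U, hUU, Matrix.one_mul,
      ← Matrix.mul_assoc (diagonal fun i => 1 + μ i), diagonal_mul_diagonal]
    have hfun : (fun i => (1 + μ i) * (1 + μ i)⁻¹) = fun _ => (1:ℝ) :=
      funext fun i => mul_inv_cancel₀ (hne i)
    rw [hfun, diagonal_one, Matrix.one_mul, hUU']
  have htrinv : ((1 + A)⁻¹).trace = ∑ i, (1 + μ i)⁻¹ := by
    rw [hinv, trace_mul_cycle, hUU, Matrix.one_mul, trace_diagonal]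
  have htrA : A.trace = ∑ i, μ i := by
    conv_lhs => rw [hspec]
    rw [trace_mul_cycle, hUU, Matrix.one_mul, trace_diagonal]
  rw [htrinv, htrA]
  exact saf_aux_sum N hN μ hμ
end

section
/- Let 1 ≤ p < 2 < q < ∞ and let P be an invertible real n×n matrix such that for every vector x ∈ ℝⁿ, ∑_{i=1}^n |(P x)_i|^p = ∑_{i=1}^n |x_i|^p and ∑_{i=1}^n |(P x)_i|^q = ∑_{i=1}^n |x_i|^q. Then P is a unitary generalized permutation matrix: every column of P contains exactly one nonzero entry, every row of P contains exactly one nonzero entry, and every nonzero entry of P equals 1 or −1. -/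
open Matrix


lemma real_rpow_add_le (u v α : ℝ) (hu : 0 ≤ u) (hv : 0 ≤ v) (h0 : 0 ≤ α) (h1 : α ≤ 1) :
    (u + v) ^ α ≤ u ^ α + v ^ α := by
  have h := NNReal.rpow_add_le_add_rpow u.toNNReal v.toNNReal h0 h1
  have h2 := NNReal.coe_le_coe.2 h
  rw [← Real.toNNReal_add hu hv] at h2
  simpa [NNReal.coe_rpow, Real.coe_toNNReal, hu, hv, add_nonneg hu hv] using h2

lemma abs_rpow_eq_sq_rpow (p : ℝ) (x : ℝ) :
    |x| ^ p = (x ^ 2) ^ (p / 2) := by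
  have : p = (2 : ℕ) * (p / 2) := by push_cast; ring
  rw [← sq_abs]
  nth_rewrite 1 [this]
  rw [Real.rpow_natCast_mul (abs_nonneg x)]

lemma clarkson_le (p : ℝ) (hp1 : 1 ≤ p) (hp2 : p < 2) (a b : ℝ) :
    |a + b| ^ p + |a - b| ^ p ≤ 2 * (|a| ^ p + |b| ^ p) := by
  have hα0 : (0:ℝ) < p/2 := by linarith
  have hα1 : p/2 < 1 := by linarith
  rw [abs_rpow_eq_sq_rpow p, abs_rpow_eq_sq_rpow p, abs_rpow_eq_sq_rpow p, abs_rpow_eq_sq_rpow p]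
  have hmid := (Real.concaveOn_rpow hα0.le hα1.le).2 (Set.mem_Ici.2 (by positivity : (0:ℝ) ≤ (a+b)^2))
    (Set.mem_Ici.2 (by positivity : (0:ℝ) ≤ (a-b)^2)) (by norm_num : (0:ℝ) ≤ 1/2)
    (by norm_num : (0:ℝ) ≤ 1/2) (by norm_num)
  simp only [smul_eq_mul] at hmid
  rw [show (1:ℝ)/2 * ((a+b)^2) + 1/2 * ((a-b)^2) = a^2 + b^2 by ring] at hmid
  have hsub := real_rpow_add_le (a^2) (b^2) (p/2) (by positivity) (by positivity) hα0.le hα1.le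
  linarith

lemma clarkson_lt (p : ℝ) (hp1 : 1 ≤ p) (hp2 : p < 2) (a b : ℝ) (hab : a * b ≠ 0) :
    |a + b| ^ p + |a - b| ^ p < 2 * (|a| ^ p + |b| ^ p) := by
  have hα0 : (0:ℝ) < p/2 := by linarith
  have hα1 : p/2 < 1 := by linarith
  rw [abs_rpow_eq_sq_rpow p, abs_rpow_eq_sq_rpow p, abs_rpow_eq_sq_rpow p, abs_rpow_eq_sq_rpow p]
  have hne : ((a+b)^2 : ℝ) ≠ (a-b)^2 := by intro h; apply hab; nlinarith
  have hmid := (Real.strictConcaveOn_rpow hα0 hα1).2 (Set.mem_Ici.2 (by positivity : (0:ℝ) ≤ (a+b)^2))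
    (Set.mem_Ici.2 (by positivity : (0:ℝ) ≤ (a-b)^2)) hne (by norm_num : (0:ℝ) < 1/2)
    (by norm_num : (0:ℝ) < 1/2) (by norm_num)
  simp only [smul_eq_mul] at hmid
  rw [show (1:ℝ)/2 * ((a+b)^2) + 1/2 * ((a-b)^2) = a^2 + b^2 by ring] at hmid
  have hsub := real_rpow_add_le (a^2) (b^2) (p/2) (by positivity) (by positivity) hα0.le hα1.le
  linarith

lemma sum_abs_rpow_pair {n : ℕ} {p : ℝ} (hpne : p ≠ 0) {j k : Fin n} (hjk : j ≠ k)
    (v : Fin n → ℝ) (hj : |v j| = 1) (hk : |v k| = 1)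
    (h0 : ∀ i, i ≠ j → i ≠ k → v i = 0) :
    ∑ i, |v i| ^ p = 2 := by
  have key : ∀ i, |v i| ^ p = (Pi.single j 1 : Fin n → ℝ) i + (Pi.single k 1 : Fin n → ℝ) i := by
    intro i
    rcases eq_or_ne i j with rfl | hij
    · rw [hj, Real.one_rpow, Pi.single_eq_same, Pi.single_eq_of_ne hjk]; ring
    · rcases eq_or_ne i k with rfl | hik
      · rw [hk, Real.one_rpow, Pi.single_eq_same, Pi.single_eq_of_ne hij]; ring
      · rw [h0 i hij hik, abs_zero, Real.zero_rpow hpne, Pi.single_eq_of_ne hij,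
          Pi.single_eq_of_ne hik]; ring
  rw [Finset.sum_congr rfl fun i _ => key i, Finset.sum_add_distrib,
    Finset.sum_pi_single', Finset.sum_pi_single']
  norm_num

/-- Section S.1.4: an invertible matrix that is simultaneously an isometry for the
entrywise ℓ_p norm (1 ≤ p < 2) and for the entrywise ℓ_q norm (2 < q < ∞) is a
unitary generalized permutation matrix: each column and each row has exactly one
nonzero entry, and every nonzero entry is 1 or −1. -/
theorem lp_lq_isometry_is_generalized_permutation (n : ℕ) (p q : ℝ)
    (hp1 : 1 ≤ p) (hp2 : p < 2) (hq : 2 < q)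
    (P : Matrix (Fin n) (Fin n) ℝ) (hP : IsUnit P)
    (hiso_p : ∀ x : Fin n → ℝ, ∑ i, |(P *ᵥ x) i| ^ p = ∑ i, |x i| ^ p)
    (hiso_q : ∀ x : Fin n → ℝ, ∑ i, |(P *ᵥ x) i| ^ q = ∑ i, |x i| ^ q) :
    (∀ j, ∃! i, P i j ≠ 0) ∧ (∀ i, ∃! j, P i j ≠ 0) ∧
      ∀ i j, P i j ≠ 0 → P i j = 1 ∨ P i j = -1 := by
  classical
  have hp0 : (0:ℝ) < p := by linarith
  have hpne : p ≠ 0 := ne_of_gt hp0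
  -- column sums equal 1
  have hcol : ∀ j, ∑ i, |P i j| ^ p = 1 := by
    intro j
    have h := hiso_p (Pi.single j 1)
    simp only [Matrix.mulVec_single_one, Matrix.col_apply, mul_one] at h
    rw [h]
    have key : ∀ i : Fin n, |(Pi.single j 1 : Fin n → ℝ) i| ^ p = (Pi.single j 1 : Fin n → ℝ) i := by
      intro i
      rcases eq_or_ne i j with rfl | hij
      · simp [Pi.single_eq_same]
      · simp [Pi.single_eq_of_ne hij, Real.zero_rpow hpne]
    rw [Finset.sum_congr rfl fun i _ => key i, Finset.sum_pi_single']
    simp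
  -- orthogonality of supports of distinct columns
  have horth : ∀ j k, j ≠ k → ∀ i, P i j * P i k = 0 := by
    intro j k hjk
    have h1 : ∑ i, |P i j + P i k| ^ p = 2 := by
      have h := hiso_p (Pi.single j 1 + Pi.single k 1)
      rw [Matrix.mulVec_add] at h
      simp only [Matrix.mulVec_single_one, Matrix.col_apply, mul_one, Pi.add_apply] at h
      rw [h]
      exact sum_abs_rpow_pair hpne hjk _
        (by simp [Pi.single_eq_same, Pi.single_eq_of_ne hjk])
        (by simp [Pi.single_eq_same, Pi.single_eq_of_ne hjk.symm])
        (fun i hij hik => by simp [Pi.single_eq_of_ne hij, Pi.single_eq_of_ne hik])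
    have h2 : ∑ i, |P i j - P i k| ^ p = 2 := by
      have h := hiso_p (Pi.single j 1 - Pi.single k 1)
      rw [Matrix.mulVec_sub] at h
      simp only [Matrix.mulVec_single_one, Matrix.col_apply, mul_one, Pi.sub_apply] at h
      rw [h]
      exact sum_abs_rpow_pair hpne hjk _
        (by simp [Pi.single_eq_same, Pi.single_eq_of_ne hjk])
        (by simp [Pi.single_eq_same, Pi.single_eq_of_ne hjk.symm])
        (fun i hij hik => by simp [Pi.single_eq_of_ne hij, Pi.single_eq_of_ne hik])
    intro i
    by_contra hi
    have hstrict := clarkson_lt p hp1 hp2 (P i j) (P i k) hi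
    have hle : ∀ i' ∈ Finset.univ, |P i' j + P i' k| ^ p + |P i' j - P i' k| ^ p
        ≤ 2 * (|P i' j| ^ p + |P i' k| ^ p) := fun i' _ => clarkson_le p hp1 hp2 _ _
    have hsum_lt := Finset.sum_lt_sum hle ⟨i, Finset.mem_univ i, hstrict⟩
    have hL : ∑ i', (|P i' j + P i' k| ^ p + |P i' j - P i' k| ^ p) = 4 := by
      rw [Finset.sum_add_distrib, h1, h2]; norm_num
    have hR : ∑ i', 2 * (|P i' j| ^ p + |P i' k| ^ p) = 4 := by
      rw [← Finset.mul_sum, Finset.sum_add_distrib, hcol j, hcol k]; norm_num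
    rw [hL, hR] at hsum_lt
    exact absurd hsum_lt (lt_irrefl _)
  -- supports
  set s : Fin n → Finset (Fin n) := fun j => Finset.univ.filter (fun i => P i j ≠ 0) with hs
  have hmem : ∀ i j, i ∈ s j ↔ P i j ≠ 0 := by intro i j; simp [hs]
  have hne : ∀ j, (s j).Nonempty := by
    intro j
    by_contra h
    rw [Finset.not_nonempty_iff_eq_empty] at h
    have hz : ∀ i, P i j = 0 := by
      intro i
      by_contra h'
      have : i ∈ s j := (hmem i j).2 h'
      simp [h] at this
    have : ∑ i, |P i j| ^ p = 0 :=
      Finset.sum_eq_zero fun i _ => by simp [hz i, Real.zero_rpow hpne]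
    rw [hcol j] at this; norm_num at this
  have hdisj : ∀ (j k : Fin n), j ≠ k → Disjoint (s j) (s k) := by
    intro j k hjk
    rw [Finset.disjoint_left]
    intro i hij hik
    rcases mul_eq_zero.1 (horth j k hjk i) with h | h
    · exact (hmem i j).1 hij h
    · exact (hmem i k).1 hik h
  have hcard_le : ∑ j, (s j).card ≤ n := by
    rw [← Finset.card_biUnion (fun j _ k _ hjk => hdisj j k hjk)]
    calc (Finset.univ.biUnion s).card ≤ (Finset.univ : Finset (Fin n)).card :=
          Finset.card_le_univ _
      _ = n := by simp
  have hcard1 : ∀ j, (s j).card = 1 := by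
    intro j
    by_contra h
    have hlt : ∑ _j' : Fin n, (1:ℕ) < ∑ j', (s j').card :=
      Finset.sum_lt_sum (fun j' _ => (hne j').card_pos)
        ⟨j, Finset.mem_univ j, by have := (hne j).card_pos; omega⟩
    simp only [Finset.sum_const, Finset.card_univ, Fintype.card_fin, smul_eq_mul, mul_one] at hlt
    omega
  have hunique_col : ∀ j, ∃! i, P i j ≠ 0 := by
    intro j
    obtain ⟨i, hi⟩ := Finset.card_eq_one.1 (hcard1 j)
    refine ⟨i, ?_, ?_⟩
    · exact (hmem i j).1 (by rw [hi]; exact Finset.mem_singleton_self i)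
    · intro i' hi'
      have : i' ∈ s j := (hmem i' j).2 hi'
      rw [hi, Finset.mem_singleton] at this
      exact this
  have hrow_uniq : ∀ (i : Fin n) (j j' : Fin n), P i j ≠ 0 → P i j' ≠ 0 → j = j' := by
    intro i j j' h1 h2
    by_contra hjj
    rcases mul_eq_zero.1 (horth j j' hjj i) with h | h
    · exact h1 h
    · exact h2 h
  choose f hf using fun j => (hunique_col j).exists
  have hinj : Function.Injective f := fun j k h => hrow_uniq (f j) j k (hf j) (h ▸ hf k)
  have hsurj : Function.Surjective f := Finite.surjective_of_injective hinj
  have hrow : ∀ i, ∃! j, P i j ≠ 0 := by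
    intro i
    obtain ⟨j, hj⟩ := hsurj i
    exact ⟨j, hj ▸ hf j, fun j' hj' => hrow_uniq i j' j hj' (hj ▸ hf j)⟩
  refine ⟨hunique_col, hrow, ?_⟩
  intro i j hij
  have hsum : ∑ i', |P i' j| ^ p = |P i j| ^ p := by
    apply Finset.sum_eq_single i
    · intro i' _ hne'
      have hz : P i' j = 0 := by
        by_contra h'
        exact hne' ((hunique_col j).unique h' hij)
      simp [hz, Real.zero_rpow hpne]
    · intro h; exact absurd (Finset.mem_univ i) h
  have h1 : |P i j| ^ p = 1 := by rw [← hsum, hcol j]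
  have h2 : |P i j| = 1 := by
    have := congrArg (fun t : ℝ => t ^ p⁻¹) h1
    simpa [Real.rpow_rpow_inv (abs_nonneg _) hpne, Real.one_rpow] using this
  rcases (abs_eq (by norm_num : (0:ℝ) ≤ 1)).1 h2 with h | h
  · exact Or.inl h
  · exact Or.inr h
end

section
/- Let Σ be a symmetric positive definite real N×N matrix, let Λ be a real N×r matrix, and let b, c > 0 be constants such that vᵀ Σ v ≤ c ‖v‖² for all v ∈ ℝᴺ and wᵀ (Λᵀ Λ) w ≥ b ‖w‖² for all w ∈ ℝʳ. Then I_r + Λᵀ Σ⁻¹ Λ is positive definite and wᵀ (I_r + Λᵀ Σ⁻¹ Λ)⁻¹ w ≤ (c/b) ‖w‖² for every w ∈ ℝʳ. -/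
open Matrix

lemma dot_self_nonneg {n : ℕ} (x : Fin n → ℝ) : 0 ≤ x ⬝ᵥ x :=
  Finset.sum_nonneg fun _ _ => mul_self_nonneg _

/-- Cauchy–Schwarz for a real positive semidefinite bilinear form. -/
lemma psd_cauchy_schwarz {n : ℕ} (A : Matrix (Fin n) (Fin n) ℝ)
    (hA : A.PosSemidef) (x y : Fin n → ℝ) :
    (x ⬝ᵥ A *ᵥ y) ^ 2 ≤ (x ⬝ᵥ A *ᵥ x) * (y ⬝ᵥ A *ᵥ y) := by
  have hAt : Aᵀ = A := by
    rw [← conjTranspose_eq_transpose_of_trivial]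
    exact hA.1
  have hsym : ∀ u v : Fin n → ℝ, u ⬝ᵥ A *ᵥ v = v ⬝ᵥ A *ᵥ u := by
    intro u v
    rw [dotProduct_mulVec, ← mulVec_transpose, hAt, dotProduct_comm]
  have key : ∀ t : ℝ, 0 ≤ (x + t • y) ⬝ᵥ A *ᵥ (x + t • y) := by
    intro t
    have := hA.dotProduct_mulVec_nonneg (x + t • y)
    simpa using this
  have expand : ∀ t : ℝ, (x + t • y) ⬝ᵥ A *ᵥ (x + t • y)
      = (x ⬝ᵥ A *ᵥ x) + 2 * t * (x ⬝ᵥ A *ᵥ y) + t ^ 2 * (y ⬝ᵥ A *ᵥ y) := by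
    intro t
    rw [mulVec_add, mulVec_smul, dotProduct_add, add_dotProduct, add_dotProduct,
      dotProduct_smul, smul_dotProduct, smul_dotProduct, dotProduct_smul,
      hsym y x]
    simp [smul_eq_mul]
    ring
  by_cases hy : y ⬝ᵥ A *ᵥ y = 0
  · -- then x ⬝ᵥ A *ᵥ y = 0
    have h1 : ∀ t : ℝ, 0 ≤ (x ⬝ᵥ A *ᵥ x) + 2 * t * (x ⬝ᵥ A *ᵥ y) := by
      intro t
      have := key t
      rw [expand t, hy] at this
      linarith
    have hxy : x ⬝ᵥ A *ᵥ y = 0 := by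
      by_contra h
      have h3 := h1 (-(x ⬝ᵥ A *ᵥ x + 1) / (2 * (x ⬝ᵥ A *ᵥ y)))
      have h2 : 2 * (-(x ⬝ᵥ A *ᵥ x + 1) / (2 * (x ⬝ᵥ A *ᵥ y))) * (x ⬝ᵥ A *ᵥ y)
          = -(x ⬝ᵥ A *ᵥ x + 1) := by
        field_simp
      rw [h2] at h3
      linarith
    rw [hxy, hy]
    norm_num
  · have hypos : 0 < y ⬝ᵥ A *ᵥ y := lt_of_le_of_ne (by simpa using hA.dotProduct_mulVec_nonneg y) (Ne.symm hy)
    have hkey := key (-(x ⬝ᵥ A *ᵥ y) / (y ⬝ᵥ A *ᵥ y))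
    rw [expand] at hkey
    have h2 : (-(x ⬝ᵥ A *ᵥ y) / (y ⬝ᵥ A *ᵥ y)) * (y ⬝ᵥ A *ᵥ y) = -(x ⬝ᵥ A *ᵥ y) :=
      div_mul_cancel₀ _ hy
    nlinarith [sq_nonneg (x ⬝ᵥ A *ᵥ y)]

/-- Displays (S.3)–(S.4) of Lemma S.1 / Lemma S.10(i): if Σ is symmetric positive
definite with largest eigenvalue at most c and Λᵀ Λ has smallest eigenvalue at
least b > 0, then I_r + Λᵀ Σ⁻¹ Λ is positive definite and
wᵀ (I_r + Λᵀ Σ⁻¹ Λ)⁻¹ w ≤ (c/b) ‖w‖² for every w. -/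
theorem quadratic_upper_bound_inv_one_add (N r : ℕ)
    (S : Matrix (Fin N) (Fin N) ℝ) (hS : S.PosDef)
    (Λ : Matrix (Fin N) (Fin r) ℝ) (b c : ℝ) (hb : 0 < b) (hc : 0 < c)
    (hSc : ∀ v : Fin N → ℝ, v ⬝ᵥ S *ᵥ v ≤ c * (v ⬝ᵥ v))
    (hΛb : ∀ w : Fin r → ℝ, b * (w ⬝ᵥ w) ≤ w ⬝ᵥ (Λᵀ * Λ) *ᵥ w) :
    (1 + Λᵀ * S⁻¹ * Λ).PosDef ∧
      ∀ w : Fin r → ℝ, w ⬝ᵥ (1 + Λᵀ * S⁻¹ * Λ)⁻¹ *ᵥ w ≤ (c / b) * (w ⬝ᵥ w) := by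
  have hSinv : (S⁻¹).PosDef := hS.inv
  have hT : Λᵀ = Λᴴ := (conjTranspose_eq_transpose_of_trivial Λ).symm
  have hQ : (Λᵀ * S⁻¹ * Λ).PosSemidef := by
    rw [hT]
    exact hSinv.posSemidef.conjTranspose_mul_mul_same Λ
  have hM : (1 + Λᵀ * S⁻¹ * Λ).PosDef := Matrix.PosDef.add_posSemidef Matrix.PosDef.one hQ
  set M := 1 + Λᵀ * S⁻¹ * Λ with hMdef
  refine ⟨hM, fun w => ?_⟩
  have hSSinv : S⁻¹ * S = 1 := nonsing_inv_mul S hS.det_pos.ne'.isUnit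
  have hMMinv : M * M⁻¹ = 1 := mul_nonsing_inv M hM.det_pos.ne'.isUnit
  -- S⁻¹ dominates (1/c) I as a quadratic form
  have hSinvLB : ∀ v : Fin N → ℝ, v ⬝ᵥ v ≤ c * (v ⬝ᵥ S⁻¹ *ᵥ v) := by
    intro v
    have hcs := psd_cauchy_schwarz S⁻¹ hSinv.posSemidef v (S *ᵥ v)
    have h1 : S⁻¹ *ᵥ (S *ᵥ v) = v := by
      rw [mulVec_mulVec, hSSinv, one_mulVec]
    have h2 : v ⬝ᵥ S⁻¹ *ᵥ (S *ᵥ v) = v ⬝ᵥ v := by rw [h1]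
    have h3 : (S *ᵥ v) ⬝ᵥ S⁻¹ *ᵥ (S *ᵥ v) = v ⬝ᵥ S *ᵥ v := by
      rw [h1, dotProduct_comm]
    rw [h2, h3] at hcs
    have h4 := hSc v
    have h5 : 0 ≤ v ⬝ᵥ S⁻¹ *ᵥ v := by simpa using hSinv.posSemidef.dotProduct_mulVec_nonneg v
    have h6 : 0 ≤ v ⬝ᵥ v := dot_self_nonneg v
    nlinarith [mul_le_mul_of_nonneg_left h4 h5, mul_nonneg hc.le h5]
  have key : ∀ x : Fin r → ℝ, b * (x ⬝ᵥ x) ≤ c * (x ⬝ᵥ M *ᵥ x) := by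
    intro x
    have hrw : x ⬝ᵥ M *ᵥ x = x ⬝ᵥ x + (Λ *ᵥ x) ⬝ᵥ S⁻¹ *ᵥ (Λ *ᵥ x) := by
      rw [hMdef, add_mulVec, dotProduct_add, one_mulVec]
      congr 1
      rw [Matrix.mul_assoc, ← mulVec_mulVec, dotProduct_mulVec, vecMul_transpose,
        mulVec_mulVec]
    have hΛ : b * (x ⬝ᵥ x) ≤ (Λ *ᵥ x) ⬝ᵥ (Λ *ᵥ x) := by
      have h := hΛb x
      rwa [← mulVec_mulVec, dotProduct_mulVec, vecMul_transpose] at h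
    have hlb := hSinvLB (Λ *ᵥ x)
    have h6 : 0 ≤ x ⬝ᵥ x := dot_self_nonneg x
    rw [hrw]
    nlinarith
  -- now the conclusion
  set u := M⁻¹ *ᵥ w with hu
  have hMu : M *ᵥ u = w := by
    rw [hu, mulVec_mulVec, hMMinv, one_mulVec]
  have ht : w ⬝ᵥ M⁻¹ *ᵥ w = u ⬝ᵥ M *ᵥ u := by
    rw [hMu, ← hu, dotProduct_comm]
  set t := u ⬝ᵥ M *ᵥ u with htdef
  have htnn : 0 ≤ t := by simpa using hM.posSemidef.dotProduct_mulVec_nonneg u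
  have hkey := key u
  have hcs : (u ⬝ᵥ w) ^ 2 ≤ (u ⬝ᵥ u) * (w ⬝ᵥ w) := by
    have := psd_cauchy_schwarz 1 (Matrix.PosSemidef.one) u w
    simpa using this
  have huw : u ⬝ᵥ w = t := by rw [htdef, hMu]
  rw [ht]
  rw [huw] at hcs
  rw [← htdef] at hkey
  rw [div_mul_eq_mul_div, le_div_iff₀ hb]
  rcases eq_or_lt_of_le htnn with h0 | h0
  · rw [← h0]
    have : 0 ≤ w ⬝ᵥ w := dot_self_nonneg w
    nlinarith
  · nlinarith [dot_self_nonneg w, dot_self_nonneg u,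
      mul_le_mul_of_nonneg_right hkey (dot_self_nonneg w), mul_pos hc h0]
end

section
/- Let Σ be a symmetric positive definite real N×N matrix with vᵀ Σ v ≤ c ‖v‖² for all v ∈ ℝᴺ, and let Λ be a real N×r matrix with b ‖w‖² ≤ wᵀ (Λᵀ Λ) w ≤ B ‖w‖² for all w ∈ ℝʳ, where b, c > 0 and B ≥ 0. Then Λᵀ Σ⁻¹ Λ is invertible and for every v ∈ ℝᴺ, vᵀ Λ (Λᵀ Σ⁻¹ Λ)⁻¹ Λᵀ v ≤ (c · B / b) ‖v‖². -/
open Matrix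

/-- Cauchy–Schwarz for the real dot product. -/
private lemma dot_cs {n : ℕ} (a bb : Fin n → ℝ) :
    (a ⬝ᵥ bb) ^ 2 ≤ (a ⬝ᵥ a) * (bb ⬝ᵥ bb) := by
  simpa [dotProduct, sq] using
    Finset.sum_mul_sq_le_sq_mul_sq Finset.univ a bb

/-- Rearrangement: `wᵀ (Λᵀ A Λ) w = (Λw)ᵀ A (Λw)`. -/
private lemma dot_conj {m n : ℕ} (Λ : Matrix (Fin m) (Fin n) ℝ)
    (A : Matrix (Fin m) (Fin m) ℝ) (w : Fin n → ℝ) :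
    w ⬝ᵥ (Λᵀ * A * Λ) *ᵥ w = (Λ *ᵥ w) ⬝ᵥ A *ᵥ (Λ *ᵥ w) := by
  rw [← Matrix.mulVec_mulVec, ← Matrix.mulVec_mulVec, Matrix.dotProduct_mulVec,
    Matrix.vecMul_transpose]

/-- Rearrangement: `wᵀ (Λᵀ Λ) w = (Λw)⬝(Λw)`. -/
private lemma dot_gram {m n : ℕ} (Λ : Matrix (Fin m) (Fin n) ℝ) (w : Fin n → ℝ) :
    w ⬝ᵥ (Λᵀ * Λ) *ᵥ w = (Λ *ᵥ w) ⬝ᵥ (Λ *ᵥ w) := by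
  rw [← Matrix.mulVec_mulVec, Matrix.dotProduct_mulVec, Matrix.vecMul_transpose]

/-- Cauchy–Schwarz for a positive semidefinite quadratic form. -/
private lemma form_cs {n : ℕ} {A : Matrix (Fin n) (Fin n) ℝ} (hA : A.PosSemidef)
    (x y : Fin n → ℝ) :
    (x ⬝ᵥ A *ᵥ y) ^ 2 ≤ (x ⬝ᵥ A *ᵥ x) * (y ⬝ᵥ A *ᵥ y) := by
  have hT : Aᵀ = A := by
    have := hA.1
    simpa [Matrix.IsHermitian, Matrix.conjTranspose_eq_transpose_of_trivial] using this
  have hsy : y ⬝ᵥ A *ᵥ x = x ⬝ᵥ A *ᵥ y := by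
    rw [Matrix.dotProduct_mulVec, ← Matrix.mulVec_transpose, hT, dotProduct_comm]
  have hq : ∀ p s : ℝ,
      0 ≤ p ^ 2 * (x ⬝ᵥ A *ᵥ x) + 2 * p * s * (x ⬝ᵥ A *ᵥ y) + s ^ 2 * (y ⬝ᵥ A *ᵥ y) := by
    intro p s
    have h := hA.dotProduct_mulVec_nonneg (p • x + s • y)
    simp only [star_trivial, Matrix.mulVec_add, Matrix.mulVec_smul, dotProduct_add,
      add_dotProduct, dotProduct_smul, smul_dotProduct, smul_eq_mul, hsy] at h
    nlinarith [h]
  have hx0 : 0 ≤ x ⬝ᵥ A *ᵥ x := by simpa using hA.dotProduct_mulVec_nonneg x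
  have hy0 : 0 ≤ y ⬝ᵥ A *ᵥ y := by simpa using hA.dotProduct_mulVec_nonneg y
  have h1 := hq (y ⬝ᵥ A *ᵥ y) (-(x ⬝ᵥ A *ᵥ y))
  have h2 := hq (x ⬝ᵥ A *ᵥ y) (-(x ⬝ᵥ A *ᵥ x))
  have h3 := hq 1 (-(x ⬝ᵥ A *ᵥ y))
  generalize x ⬝ᵥ A *ᵥ x = a at *
  generalize x ⬝ᵥ A *ᵥ y = bb at *
  generalize y ⬝ᵥ A *ᵥ y = cc at *
  rcases lt_or_eq_of_le hy0 with hcc | hcc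
  · nlinarith
  · subst hcc
    nlinarith [mul_nonneg (sq_nonneg bb) h3, sq_nonneg bb]

/-- Lower bound for the inverse quadratic form, from an upper bound on `A`. -/
private lemma inv_quad_lower {n : ℕ} {A : Matrix (Fin n) (Fin n) ℝ} (hA : A.PosDef)
    {c : ℝ} (hc : 0 < c) (h : ∀ x : Fin n → ℝ, x ⬝ᵥ A *ᵥ x ≤ c * (x ⬝ᵥ x)) :
    ∀ x : Fin n → ℝ, x ⬝ᵥ x ≤ c * (x ⬝ᵥ A⁻¹ *ᵥ x) := by
  intro x
  have hinv : (A⁻¹).PosDef := hA.inv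
  set y := A⁻¹ *ᵥ x with hy
  have hxy : A *ᵥ y = x := by
    rw [hy, Matrix.mulVec_mulVec, Matrix.mul_nonsing_inv _ (isUnit_iff_ne_zero.mpr hA.det_pos.ne'),
      Matrix.one_mulVec]
  have key : (x ⬝ᵥ x) ^ 2 ≤ (x ⬝ᵥ A *ᵥ x) * (y ⬝ᵥ x) := by
    have := form_cs hA.posSemidef x y
    rwa [hxy] at this
  have h1 : x ⬝ᵥ A *ᵥ x ≤ c * (x ⬝ᵥ x) := h x
  have h2 : y ⬝ᵥ x = x ⬝ᵥ A⁻¹ *ᵥ x := by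
    rw [dotProduct_comm, hy]
  have hnn : 0 ≤ x ⬝ᵥ A⁻¹ *ᵥ x := by
    simpa using hinv.posSemidef.dotProduct_mulVec_nonneg x
  have hxx : 0 ≤ x ⬝ᵥ x := Finset.sum_nonneg fun i _ => mul_self_nonneg _
  rw [h2] at key
  nlinarith [key, h1, hnn, hxx, mul_nonneg hxx hnn, mul_nonneg hc.le hnn]

/-- Upper bound for the inverse quadratic form, from a lower bound on `A`. -/
private lemma inv_quad_upper {n : ℕ} {A : Matrix (Fin n) (Fin n) ℝ} (hA : A.PosDef)
    {α : ℝ} (hα : 0 < α) (h : ∀ x : Fin n → ℝ, α * (x ⬝ᵥ x) ≤ x ⬝ᵥ A *ᵥ x) :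
    ∀ u : Fin n → ℝ, α * (u ⬝ᵥ A⁻¹ *ᵥ u) ≤ u ⬝ᵥ u := by
  intro u
  set z := A⁻¹ *ᵥ u with hz
  have huz : A *ᵥ z = u := by
    rw [hz, Matrix.mulVec_mulVec, Matrix.mul_nonsing_inv _ (isUnit_iff_ne_zero.mpr hA.det_pos.ne'),
      Matrix.one_mulVec]
  have h1 : u ⬝ᵥ z = z ⬝ᵥ A *ᵥ z := by rw [← huz, dotProduct_comm]
  have h2 : α * (z ⬝ᵥ z) ≤ u ⬝ᵥ z := by rw [h1]; exact h z
  have h3 := dot_cs u z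
  have hzz : 0 ≤ z ⬝ᵥ z := Finset.sum_nonneg fun i _ => mul_self_nonneg _
  have huu : 0 ≤ u ⬝ᵥ u := Finset.sum_nonneg fun i _ => mul_self_nonneg _
  rcases le_or_gt (u ⬝ᵥ z) 0 with ht | ht
  · nlinarith [mul_nonpos_of_nonneg_of_nonpos hα.le ht, huu]
  · have h4 := mul_le_mul_of_nonneg_left h2 huu
    have h5 := mul_le_mul_of_nonneg_left h3 hα.le
    nlinarith [h4, h5, ht]

/-- Deterministic bound π_max(Λ (Λᵀ Σ⁻¹ Λ)⁻¹ Λᵀ) ≤ c·B/b used to control A₄ in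
Lemma S.1: if the largest eigenvalue of the symmetric positive definite Σ is at
most c and the eigenvalues of Λᵀ Λ lie in [b, B] with b > 0, then Λᵀ Σ⁻¹ Λ is
invertible and vᵀ Λ (Λᵀ Σ⁻¹ Λ)⁻¹ Λᵀ v ≤ (c B / b) ‖v‖² for every v. -/
theorem projection_quadratic_upper_bound (N r : ℕ)
    (S : Matrix (Fin N) (Fin N) ℝ) (hS : S.PosDef)
    (Λ : Matrix (Fin N) (Fin r) ℝ) (b c B : ℝ) (hb : 0 < b) (hc : 0 < c) (hB : 0 ≤ B)
    (hSc : ∀ v : Fin N → ℝ, v ⬝ᵥ S *ᵥ v ≤ c * (v ⬝ᵥ v))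
    (hlow : ∀ w : Fin r → ℝ, b * (w ⬝ᵥ w) ≤ w ⬝ᵥ (Λᵀ * Λ) *ᵥ w)
    (hup : ∀ w : Fin r → ℝ, w ⬝ᵥ (Λᵀ * Λ) *ᵥ w ≤ B * (w ⬝ᵥ w)) :
    IsUnit (Λᵀ * S⁻¹ * Λ) ∧
      ∀ v : Fin N → ℝ,
        v ⬝ᵥ (Λ * (Λᵀ * S⁻¹ * Λ)⁻¹ * Λᵀ) *ᵥ v ≤ (c * B / b) * (v ⬝ᵥ v) := by
  have hSinv : (S⁻¹).PosDef := hS.inv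
  have hMher : (Λᵀ * S⁻¹ * Λ).IsHermitian := by
    have h1 : (S⁻¹)ᵀ = S⁻¹ := by
      have := hSinv.1
      simpa [Matrix.IsHermitian, Matrix.conjTranspose_eq_transpose_of_trivial] using this
    show (Λᵀ * S⁻¹ * Λ)ᴴ = _
    rw [Matrix.conjTranspose_eq_transpose_of_trivial, Matrix.transpose_mul, Matrix.transpose_mul,
      Matrix.transpose_transpose, h1, Matrix.mul_assoc]
  have hMw : ∀ w : Fin r → ℝ, w ⬝ᵥ (Λᵀ * S⁻¹ * Λ) *ᵥ w = (Λ *ᵥ w) ⬝ᵥ S⁻¹ *ᵥ (Λ *ᵥ w) :=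
    fun w => dot_conj Λ S⁻¹ w
  have hMpos : (Λᵀ * S⁻¹ * Λ).PosDef := by
    refine Matrix.PosDef.of_dotProduct_mulVec_pos hMher fun w hw => ?_
    have hΛw : Λ *ᵥ w ≠ 0 := by
      intro h0
      have h1 := hlow w
      rw [dot_gram, h0] at h1
      have hww0 : (0:ℝ) ≤ w ⬝ᵥ w := Finset.sum_nonneg fun i _ => mul_self_nonneg _
      have hww : 0 < w ⬝ᵥ w :=
        lt_of_le_of_ne hww0 fun h => hw (dotProduct_self_eq_zero.mp h.symm)
      simp only [dotProduct_zero] at h1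
      nlinarith
    have := hSinv.dotProduct_mulVec_pos hΛw
    simpa [hMw w] using this
  refine ⟨hMpos.isUnit, fun v => ?_⟩
  have hMlow : ∀ w : Fin r → ℝ, (b / c) * (w ⬝ᵥ w) ≤ w ⬝ᵥ (Λᵀ * S⁻¹ * Λ) *ᵥ w := by
    intro w
    have h1 : (Λ *ᵥ w) ⬝ᵥ (Λ *ᵥ w) ≤ c * ((Λ *ᵥ w) ⬝ᵥ S⁻¹ *ᵥ (Λ *ᵥ w)) :=
      inv_quad_lower hS hc hSc (Λ *ᵥ w)
    have h2 := hlow w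
    rw [dot_gram] at h2
    rw [hMw w, div_mul_eq_mul_div, div_le_iff₀ hc]
    nlinarith
  have hupper := inv_quad_upper hMpos (div_pos hb hc) hMlow (Λᵀ *ᵥ v)
  set u := Λᵀ *ᵥ v with hu
  have hLHS : v ⬝ᵥ (Λ * (Λᵀ * S⁻¹ * Λ)⁻¹ * Λᵀ) *ᵥ v = u ⬝ᵥ (Λᵀ * S⁻¹ * Λ)⁻¹ *ᵥ u := by
    have := dot_conj Λᵀ (Λᵀ * S⁻¹ * Λ)⁻¹ v
    rwa [Matrix.transpose_transpose] at this
  have huu : u ⬝ᵥ u ≤ B * (v ⬝ᵥ v) := by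
    have h1 : u ⬝ᵥ u = v ⬝ᵥ Λ *ᵥ u := by
      nth_rewrite 1 [hu]
      rw [Matrix.mulVec_transpose, ← Matrix.dotProduct_mulVec]
    have h2 := dot_cs v (Λ *ᵥ u)
    have h3 : (Λ *ᵥ u) ⬝ᵥ (Λ *ᵥ u) ≤ B * (u ⬝ᵥ u) := by
      rw [← dot_gram]; exact hup u
    have hvv : 0 ≤ v ⬝ᵥ v := Finset.sum_nonneg fun i _ => mul_self_nonneg _
    have huu0 : 0 ≤ u ⬝ᵥ u := Finset.sum_nonneg fun i _ => mul_self_nonneg _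
    rcases le_or_gt (u ⬝ᵥ u) 0 with ht | ht
    · exact ht.trans (mul_nonneg hB hvv)
    · have h4 := mul_le_mul_of_nonneg_left h3 hvv
      nlinarith [h2, h4, h1, ht]
  rw [hLHS]
  have h5 : b * (u ⬝ᵥ (Λᵀ * S⁻¹ * Λ)⁻¹ *ᵥ u) ≤ c * (u ⬝ᵥ u) := by
    rw [div_mul_eq_mul_div, div_le_iff₀ hc] at hupper
    linarith
  rw [div_mul_eq_mul_div, le_div_iff₀ hb]
  nlinarith [h5, mul_le_mul_of_nonneg_left huu hc.le]
end
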